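/- Let R be a field and let G and A be groups. Let a₁, …, a_t be distinct elements of A, let α₁, …, α_t be nonzero elements of R, and let u₁, …, u_t ∈ R[G]. In R[G × A], let u = Σ_{i=1}^{t} α_i·ū_i·(1, a_i), where ū_i is the image of u_i under the embedding g ↦ (g, 1) and (1, a_i) denotes the corresponding group element. Then supp(u) = supp(u₁) + supp(u₂) + … + supp(u_t). -/

import Mathlib

noncomputable section

open MonoidAlgebra

/-- The weight (support size) of an element of a group algebra. -/
def wt {R : Type*} [Semiring R] {G : Type*} (x : MonoidAlgebra R G) : ℕ :=
  (x.coeff : G →₀ R).support.card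

lemma mul_single_one_eq_mapDomain {R : Type*} [Semiring R] {H : Type*} [Group H]
    (x : MonoidAlgebra R H) (b : H) :
    x * MonoidAlgebra.single b (1 : R) = MonoidAlgebra.ofCoeff (Finsupp.mapDomain (· * b) x.coeff) := by
  ext y
  rw [MonoidAlgebra.coeff_mul_single_apply, mul_one, MonoidAlgebra.coeff_ofCoeff]
  have hinj : Function.Injective (· * b) := mul_left_injective b
  have : y = (y * b⁻¹) * b := by group
  rw [this, Finsupp.mapDomain_apply hinj]; group

lemma term_eq {R : Type*} [Field R] {G A : Type*} [Group G] [Group A]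
    (b : A) (c : R) (v : MonoidAlgebra R G) :
    c • (MonoidAlgebra.mapDomainRingHom R (MonoidHom.inl G A) v *
        MonoidAlgebra.of R (G × A) (1, b)) =
      MonoidAlgebra.ofCoeff (Finsupp.mapDomain (fun g => (g, b)) (c • v).coeff) := by
  have h1 : MonoidAlgebra.of R (G × A) (1, b) = MonoidAlgebra.single ((1 : G), b) (1 : R) := rfl
  have h2 : MonoidAlgebra.mapDomainRingHom R (MonoidHom.inl G A) v =
      MonoidAlgebra.ofCoeff (Finsupp.mapDomain (fun g : G => ((g, 1) : G × A)) v.coeff) := rfl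
  rw [h1, h2, mul_single_one_eq_mapDomain, MonoidAlgebra.coeff_ofCoeff, ← Finsupp.mapDomain_comp,
    MonoidAlgebra.coeff_smul, Finsupp.mapDomain_smul]
  have h3 : ((fun x => x * ((1 : G), b)) ∘ fun g : G => ((g, 1) : G × A)) = fun g : G => (g, b) := by
    funext g; simp
  rw [h3]; rfl

theorem support_card_of_sum {R : Type*} [Field R] {G A : Type*} [Group G] [Group A]
    (t : ℕ) (a : Fin t → A) (ha : Function.Injective a)
    (α : Fin t → R) (hα : ∀ i, α i ≠ 0)
    (u : Fin t → MonoidAlgebra R G) :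
    wt (∑ i : Fin t,
        α i • (MonoidAlgebra.mapDomainRingHom R (MonoidHom.inl G A) (u i) *
          MonoidAlgebra.of R (G × A) (1, a i))) =
      ∑ i : Fin t, wt (u i) := by
  classical
  have hterm : ∀ i : Fin t,
      α i • (MonoidAlgebra.mapDomainRingHom R (MonoidHom.inl G A) (u i) *
        MonoidAlgebra.of R (G × A) (1, a i)) =
      MonoidAlgebra.ofCoeff (Finsupp.mapDomain (fun g => (g, a i)) (α i • u i).coeff) := fun i => term_eq (a i) (α i) (u i)
  have hsupp : ∀ i : Fin t,
      (Finsupp.mapDomain (fun g => (g, a i)) (α i • u i).coeff).support =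
        (u i).coeff.support.image (fun g => (g, a i)) := by
    intro i
    have hinj : Function.Injective (fun g : G => ((g, a i) : G × A)) := by
      intro x y h; exact (Prod.mk.injEq _ _ _ _ ▸ h).1
    rw [Finsupp.mapDomain_support_of_injective hinj, MonoidAlgebra.coeff_smul, Finsupp.support_smul_eq (hα i)]
  simp_rw [hterm]
  unfold wt
  simp only [MonoidAlgebra.coeff_sum, MonoidAlgebra.coeff_ofCoeff]
  rw [Finsupp.support_sum_eq_biUnion]
  · rw [Finset.card_biUnion]
    · refine Finset.sum_congr rfl fun i _ => ?_
      rw [hsupp i, Finset.card_image_of_injective]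
      intro x y h; exact (Prod.mk.injEq _ _ _ _ ▸ h).1
    · intro i _ j _ hij
      show Disjoint (Finsupp.mapDomain (fun g => (g, a i)) (α i • u i).coeff).support
        (Finsupp.mapDomain (fun g => (g, a j)) (α j • u j).coeff).support
      rw [hsupp i, hsupp j]
      simp only [Finset.disjoint_left, Finset.mem_image]
      rintro p ⟨x, _, rfl⟩ ⟨y, _, hy⟩
      exact hij (ha (Prod.mk.injEq _ _ _ _ ▸ hy).2.symm)
  · intro i j hij
    show Disjoint _ _
    rw [hsupp i, hsupp j]
    simp only [Finset.disjoint_left, Finset.mem_image]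
    rintro p ⟨x, _, rfl⟩ ⟨y, _, hy⟩
    exact hij (ha (Prod.mk.injEq _ _ _ _ ▸ hy).2.symm)

end
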